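/- For all real numbers a ≥ 0, b ≥ 0, η > 1 and ε > 0, one has |a^η − b^η| ≤ ε^{−η} |a − b|^η + (η − 1) (2ε)^{η/(η−1)} ( a^η + b^η ). -/

import Mathlib

open Real

/-- MVT-style bound: for `0 ≤ b ≤ a` and `1 ≤ η`, `a^η - b^η ≤ η a^{η-1}(a-b)`. -/
lemma rpow_sub_rpow_le_aux (a b η : ℝ) (hb : 0 ≤ b) (hab : b ≤ a) (hη : 1 ≤ η) :
    a ^ η - b ^ η ≤ η * a ^ (η - 1) * (a - b) := by
  rcases eq_or_lt_of_le hab with h | h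
  · subst h; simp
  · obtain ⟨c, hc, hceq⟩ := exists_hasDerivAt_eq_slope (fun x : ℝ => x ^ η)
      (fun x : ℝ => η * x ^ (η - 1)) h
      (fun x _ => (Real.hasDerivAt_rpow_const (Or.inr hη)).continuousAt.continuousWithinAt)
      (fun x _ => Real.hasDerivAt_rpow_const (Or.inr hη))
    have hc0 : 0 ≤ c := le_of_lt (lt_of_le_of_lt hb hc.1)
    have hca : c ≤ a := hc.2.le
    have heq : a ^ η - b ^ η = η * c ^ (η - 1) * (a - b) := by
      rw [eq_comm, hceq, div_mul_cancel₀]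
      exact sub_ne_zero.2 (ne_of_gt h)
    rw [heq]
    have hpow : c ^ (η - 1) ≤ a ^ (η - 1) :=
      Real.rpow_le_rpow hc0 hca (by linarith)
    have hab' : 0 ≤ a - b := by linarith
    have hη0 : 0 ≤ η := by linarith
    exact mul_le_mul_of_nonneg_right (mul_le_mul_of_nonneg_left hpow hη0) hab'

/-- `(η/2)^{η/(η-1)} ≤ η` for `η > 1`. -/
lemma half_rpow_conj_le (η : ℝ) (hη : 1 < η) : (η / 2) ^ (η / (η - 1)) ≤ η := by
  have hηpos : (0:ℝ) < η := by linarith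
  have h2 : η ≤ 2 ^ η := by
    have := one_add_mul_self_le_rpow_one_add (by norm_num : (-1:ℝ) ≤ 1) hη.le
    norm_num at this
    linarith
  have hlog : Real.log η ≤ η * Real.log 2 := by
    have := Real.log_le_log hηpos h2
    rwa [Real.log_rpow (by norm_num)] at this
  have hhalf : (0:ℝ) < η / 2 := by linarith
  rw [Real.rpow_def_of_pos hhalf]
  refine le_trans (Real.exp_le_exp.2 ?_) (le_of_eq (Real.exp_log hηpos))
  rw [Real.log_div (ne_of_gt hηpos) (by norm_num), mul_div_assoc',
    div_le_iff₀ (by linarith : (0:ℝ) < η - 1)]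
  nlinarith

/-- One-sided version of the main inequality, for `b ≤ a`. -/
lemma rpow_sub_le_aux (a b η ε : ℝ) (hb : 0 ≤ b) (hab : b ≤ a)
    (hη : 1 < η) (hε : 0 < ε) :
    a ^ η - b ^ η ≤
      ε ^ (-η) * (a - b) ^ η + (η - 1) * (2 * ε) ^ (η / (η - 1)) * (a ^ η + b ^ η) := by
  have ha : 0 ≤ a := hb.trans hab
  set q : ℝ := η / (η - 1) with hqdef
  have hq : η.HolderConjugate q := Real.HolderConjugate.conjExponent hη
  have hsub : (0:ℝ) < η - 1 := by linarith
  have hηpos : (0:ℝ) < η := by linarith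
  have hx0 : 0 ≤ (a - b) / ε := div_nonneg (by linarith) hε.le
  have hy0 : 0 ≤ η * ε * a ^ (η - 1) :=
    mul_nonneg (mul_nonneg hηpos.le hε.le) (Real.rpow_nonneg ha _)
  have young := Real.young_inequality_of_nonneg hx0 hy0 hq
  have hxy : (a - b) / ε * (η * ε * a ^ (η - 1)) = η * a ^ (η - 1) * (a - b) := by
    field_simp
  have hxp : ((a - b) / ε) ^ η = ε ^ (-η) * (a - b) ^ η := by
    rw [Real.div_rpow (by linarith) hε.le, Real.rpow_neg hε.le]
    ring
  have hsq : (η - 1) * q = η := by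
    rw [hqdef]; field_simp
  have hyq : (η * ε * a ^ (η - 1)) ^ q = (η * ε) ^ q * a ^ η := by
    rw [Real.mul_rpow (mul_nonneg hηpos.le hε.le) (Real.rpow_nonneg ha _),
      ← Real.rpow_mul ha, hsq]
  have hμ : (η * ε) ^ q ≤ η * (2 * ε) ^ q := by
    have : η * ε = (η / 2) * (2 * ε) := by ring
    rw [this, Real.mul_rpow (by linarith) (by linarith)]
    have h1 := half_rpow_conj_le η hη
    have h2 : (0:ℝ) ≤ (2 * ε) ^ q := Real.rpow_nonneg (by linarith) _
    nlinarith
  have hqinv : 1 / q = (η - 1) / η := by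
    rw [hqdef]; field_simp
  have key := rpow_sub_rpow_le_aux a b η hb hab hη.le
  have hq0 : 0 < q := hq.symm.pos
  have haη : (0:ℝ) ≤ a ^ η := Real.rpow_nonneg ha _
  have hbη : (0:ℝ) ≤ b ^ η := Real.rpow_nonneg hb _
  have h2ε : (0:ℝ) ≤ (2 * ε) ^ q := Real.rpow_nonneg (by linarith) _
  calc a ^ η - b ^ η ≤ η * a ^ (η - 1) * (a - b) := key
    _ = (a - b) / ε * (η * ε * a ^ (η - 1)) := hxy.symm
    _ ≤ ((a - b) / ε) ^ η / η + (η * ε * a ^ (η - 1)) ^ q / q := young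
    _ = (ε ^ (-η) * (a - b) ^ η) / η + (η * ε) ^ q * a ^ η * ((η - 1) / η) := by
        rw [hxp, hyq, div_eq_mul_one_div ((η * ε) ^ q * a ^ η) q, hqinv]
    _ ≤ ε ^ (-η) * (a - b) ^ η + (η - 1) * (2 * ε) ^ q * (a ^ η + b ^ η) := by
        have t1 : (ε ^ (-η) * (a - b) ^ η) / η ≤ ε ^ (-η) * (a - b) ^ η := by
          apply div_le_self _ hη.le
          exact mul_nonneg (Real.rpow_nonneg hε.le _) (Real.rpow_nonneg (by linarith) _)
        have t2 : (η * ε) ^ q * a ^ η * ((η - 1) / η) ≤ (η - 1) * (2 * ε) ^ q * (a ^ η + b ^ η) := by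
          have s1 : (η * ε) ^ q * a ^ η * ((η - 1) / η) ≤
              η * (2 * ε) ^ q * a ^ η * ((η - 1) / η) := by
            have : 0 ≤ a ^ η * ((η - 1) / η) :=
              mul_nonneg haη (div_nonneg hsub.le hηpos.le)
            nlinarith
          have s2 : η * (2 * ε) ^ q * a ^ η * ((η - 1) / η) = (η - 1) * (2 * ε) ^ q * a ^ η := by
            field_simp
          have s3 : (η - 1) * (2 * ε) ^ q * a ^ η ≤ (η - 1) * (2 * ε) ^ q * (a ^ η + b ^ η) := by
            nlinarith [mul_nonneg hsub.le h2ε]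
          linarith [s1, s2 ▸ s1, s3]
        linarith
  -- done

/-- Elementary rpow inequality: for `a, b ≥ 0`, `η > 1` and `ε > 0`,
`|a^η − b^η| ≤ ε^{−η} |a − b|^η + (η − 1) (2ε)^{η/(η−1)} (a^η + b^η)`. -/
theorem rpow_abs_sub_le (a b η ε : ℝ) (ha : 0 ≤ a) (hb : 0 ≤ b)
    (hη : 1 < η) (hε : 0 < ε) :
    |a ^ η - b ^ η| ≤
      ε ^ (-η) * |a - b| ^ η + (η - 1) * (2 * ε) ^ (η / (η - 1)) * (a ^ η + b ^ η) := by
  rcases le_total b a with hab | hab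
  · rw [abs_of_nonneg (sub_nonneg.2 (Real.rpow_le_rpow hb hab (by linarith : (0:ℝ) ≤ η))),
      abs_of_nonneg (by linarith : (0:ℝ) ≤ a - b)]
    exact rpow_sub_le_aux a b η ε hb hab hη hε
  · rw [abs_sub_comm (a ^ η), abs_sub_comm a b,
      abs_of_nonneg (sub_nonneg.2 (Real.rpow_le_rpow ha hab (by linarith : (0:ℝ) ≤ η))),
      abs_of_nonneg (by linarith : (0:ℝ) ≤ b - a), add_comm (a ^ η)]
    exact rpow_sub_le_aux b a η ε ha hab hη hε
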